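/- Let n ≥ 1 and N ≥ 2 be integers. Then there exists a constant C such that for all nonnegative functions A_1, …, A_N on ℤ^n, Σ_{ν_1, …, ν_N ∈ ℤ^n} (1 + |ν_1| + ⋯ + |ν_N|)^{−Nn/2} ∏_{j=1}^N A_j(ν_j) ≤ C ∏_{j=1}^N ‖A_j‖_{ℓ²(ℤ^n)}. -/

import Mathlib

open MeasureTheory Complex Real SchwartzMap
open scoped ENNReal NNReal BigOperators RealInnerProductSpace

noncomputable section

/-- `ℝ^n` with the Euclidean norm. -/
abbrev Rn (n : ℕ) : Type := EuclideanSpace ℝ (Fin n)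

/-- Fourier transform with the convention `f̂(ξ) = ∫ e^{-i ξ·x} f(x) dx`. -/
def ft (n : ℕ) (f : Rn n → ℂ) (ξ : Rn n) : ℂ :=
  ∫ x : Rn n, Complex.exp (-Complex.I * ((⟪ξ, x⟫ : ℝ) : ℂ)) * f x

/-- Inverse Fourier transform `F⁻¹g(x) = (2π)^{-n} ∫ e^{i x·ξ} g(ξ) dξ`. -/
def invFt (n : ℕ) (g : Rn n → ℂ) (x : Rn n) : ℂ :=
  (((2 * π) ^ n : ℝ) : ℂ)⁻¹ * ∫ ξ : Rn n, Complex.exp (Complex.I * ((⟪x, ξ⟫ : ℝ) : ℂ)) * g ξ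

/-- The `N`-linear pseudo-differential operator `T_σ` with `x`-dependent symbol. -/
def pdo (n N : ℕ) (σ : Rn n × (Fin N → Rn n) → ℂ) (f : Fin N → 𝓢(Rn n, ℂ)) (x : Rn n) : ℂ :=
  (((2 * π) ^ (N * n) : ℝ) : ℂ)⁻¹ *
    ∫ ξ : Fin N → Rn n,
      Complex.exp (Complex.I * ((∑ j, ⟪x, ξ j⟫ : ℝ) : ℂ)) * σ (x, ξ) * ∏ j, ft n ⇑(f j) (ξ j)

/-- The `N`-linear Fourier multiplier operator `T_σ` (`x`-independent symbol). -/
def pdoX (n N : ℕ) (σ : (Fin N → Rn n) → ℂ) (f : Fin N → 𝓢(Rn n, ℂ)) (x : Rn n) : ℂ :=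
  (((2 * π) ^ (N * n) : ℝ) : ℂ)⁻¹ *
    ∫ ξ : Fin N → Rn n,
      Complex.exp (Complex.I * ((∑ j, ⟪x, ξ j⟫ : ℝ) : ℂ)) * σ ξ * ∏ j, ft n ⇑(f j) (ξ j)

/-- The multilinear Hörmander class `S^m_{0,0}(ℝ^n, N)`. -/
def SymbolClassS (n N : ℕ) (m : ℝ) (σ : Rn n × (Fin N → Rn n) → ℂ) : Prop :=
  ContDiff ℝ (⊤ : ℕ∞) σ ∧
    ∀ k : ℕ, ∃ C : ℝ, ∀ (x : Rn n) (ξ : Fin N → Rn n),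
      ‖iteratedFDeriv ℝ k σ (x, ξ)‖ ≤ C * (1 + ∑ j, ‖ξ j‖) ^ m

/-- The class `S^{m⃗}_{0,0}(ℝ^n, N)` with a vector of orders. -/
def SymbolClassV (n N : ℕ) (m : Fin N → ℝ) (σ : Rn n × (Fin N → Rn n) → ℂ) : Prop :=
  ContDiff ℝ (⊤ : ℕ∞) σ ∧
    ∀ k : ℕ, ∃ C : ℝ, ∀ (x : Rn n) (ξ : Fin N → Rn n),
      ‖iteratedFDeriv ℝ k σ (x, ξ)‖ ≤ C * ∏ j, (1 + ‖ξ j‖) ^ (m j)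

/-- The class `S^m_{0,0}(ℝ^n, N)^×` of `x`-independent symbols (multipliers). -/
def MultClassS (n N : ℕ) (m : ℝ) (σ : (Fin N → Rn n) → ℂ) : Prop :=
  ContDiff ℝ (⊤ : ℕ∞) σ ∧
    ∀ k : ℕ, ∃ C : ℝ, ∀ ξ : Fin N → Rn n,
      ‖iteratedFDeriv ℝ k σ ξ‖ ≤ C * (1 + ∑ j, ‖ξ j‖) ^ m

/-- Euclidean norm of a lattice point in `ℤ^n`. -/
def zn (n : ℕ) (ν : Fin n → ℤ) : ℝ := Real.sqrt (∑ i, ((ν i : ℝ)) ^ 2)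

/-- Embedding of `ℤ^n` into `ℝ^n`. -/
def zv (n : ℕ) (k : Fin n → ℤ) : Rn n := WithLp.toLp 2 (fun i => (k i : ℝ))


/-- Partial sums bounded implies tsum of `ofReal` bounded. -/
lemma helper_tsum_ofReal_le {f : ℕ → ℝ} {B : ℝ} (hf : ∀ m, 0 ≤ f m)
    (h : ∀ M : ℕ, ∑ m ∈ Finset.range M, f m ≤ B) :
    ∑' m : ℕ, ENNReal.ofReal (f m) ≤ ENNReal.ofReal B := by
  rw [ENNReal.tsum_eq_iSup_sum]
  refine iSup_le fun s => ?_
  classical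
  obtain ⟨M, hM⟩ : ∃ M, s ⊆ Finset.range M := ⟨(s.sup id) + 1, fun x hx =>
    Finset.mem_range.2 (Nat.lt_succ_of_le (Finset.le_sup (f := id) hx))⟩
  calc ∑ m ∈ s, ENNReal.ofReal (f m) ≤ ∑ m ∈ Finset.range M, ENNReal.ofReal (f m) :=
        Finset.sum_le_sum_of_subset hM
    _ ≤ ENNReal.ofReal (∑ m ∈ Finset.range M, f m) := (ENNReal.ofReal_sum_of_nonneg (fun m _ => hf m)).ge
    _ ≤ ENNReal.ofReal B := ENNReal.ofReal_le_ofReal (h M)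

/-- MVT for rpow on `[x, x+1]`. -/
lemma slope_rpow (e : ℝ) {x : ℝ} (hx : 0 < x) :
    ∃ c, x < c ∧ c < x + 1 ∧ (x + 1) ^ e - x ^ e = e * c ^ (e - 1) := by
  have hlt : x < x + 1 := by linarith
  have hcont : ContinuousOn (fun t : ℝ => t ^ e) (Set.Icc x (x + 1)) := by
    intro t ht
    exact (Real.continuousAt_rpow_const t e (Or.inl (by nlinarith [ht.1]))).continuousWithinAt
  have hderiv : ∀ t ∈ Set.Ioo x (x + 1),
      HasDerivAt (fun t : ℝ => t ^ e) (e * t ^ (e - 1)) t := fun t ht =>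
    Real.hasDerivAt_rpow_const (Or.inl (by nlinarith [ht.1]))
  obtain ⟨c, hc, hceq⟩ := exists_hasDerivAt_eq_slope (fun t : ℝ => t ^ e)
    (fun t => e * t ^ (e - 1)) hlt hcont hderiv
  refine ⟨c, hc.1, hc.2, ?_⟩
  rw [hceq]
  field_simp
  ring



/-- Telescoping decay estimate: one-step bound. -/
lemma rpow_step {q : ℝ} (hq : 0 < q) {x : ℝ} (hx : 1 ≤ x) :
    x ^ (-q-1) ≤ (2 ^ (q+1) / q) * (x ^ (-q) - (x + 1) ^ (-q)) := by
  have hx0 : (0:ℝ) < x := lt_of_lt_of_le one_pos hx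
  obtain ⟨c, hc1, hc2, hc3⟩ := slope_rpow (-q) hx0
  have hc0 : 0 < c := lt_trans hx0 hc1
  have hdiff : x ^ (-q) - (x+1) ^ (-q) = q * c ^ (-q-1) := by
    rw [← neg_sub ((x+1) ^ (-q)), hc3]; ring
  have hcb : (2*x) ^ (-q-1) ≤ c ^ (-q-1) :=
    Real.rpow_le_rpow_of_nonpos hc0 (by linarith) (by linarith)
  have h2x : (2*x) ^ (-q-1) = 2 ^ (-q-1) * x ^ (-q-1) :=
    Real.mul_rpow (by norm_num) (le_of_lt hx0)
  have hq0 : (0:ℝ) < 2 ^ (q+1) / q := by positivity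
  calc x ^ (-q-1) = (2 ^ (q+1) * 2 ^ (-q-1)) * x ^ (-q-1) := by
        rw [← Real.rpow_add two_pos]
        norm_num
    _ = (2 ^ (q+1) / q) * (q * (2 ^ (-q-1) * x ^ (-q-1))) := by
        field_simp
    _ ≤ (2 ^ (q+1) / q) * (x ^ (-q) - (x + 1) ^ (-q)) := by
        apply mul_le_mul_of_nonneg_left _ hq0.le
        rw [hdiff]
        exact mul_le_mul_of_nonneg_left (h2x ▸ hcb) hq.le

/-- Tail sum estimate: `∑ (b+m)^{-q} ≤ C b^{-(q-1)}` for `q > 1`, `b ≥ 1`. -/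
lemma tail_sum {q b : ℝ} (hq : 1 < q) (hb : 1 ≤ b) :
    ∑' m : ℕ, ENNReal.ofReal ((b + m) ^ (-q)) ≤
      ENNReal.ofReal ((2 ^ q / (q - 1)) * b ^ (-(q-1))) := by
  apply helper_tsum_ofReal_le (fun m => Real.rpow_nonneg (by positivity) _)
  intro M
  set g : ℕ → ℝ := fun m => (b + (m:ℝ)) ^ (-(q-1)) with hg
  have hterm : ∀ m : ℕ, (b + (m:ℝ)) ^ (-q) ≤ (2^q/(q-1)) * (g m - g (m+1)) := by
    intro m
    have h1 : (1:ℝ) ≤ b + m := by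
      have := Nat.cast_nonneg (α := ℝ) m; linarith
    have h := rpow_step (q := q-1) (by linarith) h1
    have e2 : (q-1) + 1 = q := by ring
    have e3 : -(q-1) - 1 = -q := by ring
    rw [e2, e3] at h
    have e4 : g (m+1) = (b + (m:ℝ) + 1) ^ (-(q-1)) := by
      simp only [hg]; push_cast; ring_nf
    simp only [hg]
    push_cast
    convert h using 3 <;> ring
  calc ∑ m ∈ Finset.range M, (b + (m:ℝ)) ^ (-q)
      ≤ ∑ m ∈ Finset.range M, (2^q/(q-1)) * (g m - g (m+1)) :=
        Finset.sum_le_sum (fun m _ => hterm m)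
    _ = (2^q/(q-1)) * (g 0 - g M) := by
        rw [← Finset.mul_sum, Finset.sum_range_sub' g]
    _ ≤ (2^q/(q-1)) * b ^ (-(q-1)) := by
        apply mul_le_mul_of_nonneg_left _ (le_of_lt (div_pos (Real.rpow_pos_of_pos two_pos q) (by linarith)))
        have : g 0 = b ^ (-(q-1)) := by simp [hg]
        have hgM : 0 ≤ g M := Real.rpow_nonneg (by positivity) _
        linarith [this ▸ le_refl (g 0)]
/-- Increasing telescoping step for `-1 < a < 0`. -/
lemma head_step {a : ℝ} (ha : -1 < a) (ha' : a < 0) {x : ℝ} (hx : 1 ≤ x) :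
    x ^ a ≤ (1/((a+1) * 2^a)) * ((x+1) ^ (a+1) - x ^ (a+1)) := by
  have hx0 : (0:ℝ) < x := lt_of_lt_of_le one_pos hx
  obtain ⟨c, hc1, hc2, hc3⟩ := slope_rpow (a+1) hx0
  have hc0 : 0 < c := lt_trans hx0 hc1
  have he : a + 1 - 1 = a := by ring
  rw [he] at hc3
  have hcb : (2*x) ^ a ≤ c ^ a :=
    Real.rpow_le_rpow_of_nonpos hc0 (by linarith) ha'.le
  have h2x : (2*x) ^ a = 2 ^ a * x ^ a := Real.mul_rpow (by norm_num) hx0.le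
  have h2a : (0:ℝ) < 2 ^ a := Real.rpow_pos_of_pos two_pos a
  have hr : (0:ℝ) < a + 1 := by linarith
  calc x ^ a = (1/((a+1) * 2^a)) * ((a+1) * (2^a * x^a)) := by field_simp
    _ ≤ (1/((a+1) * 2^a)) * ((x+1) ^ (a+1) - x ^ (a+1)) := by
        apply mul_le_mul_of_nonneg_left _ (by positivity)
        rw [hc3]
        exact mul_le_mul_of_nonneg_left (h2x ▸ hcb) hr.le

/-- Head sum estimate for `-1 < a < 0`. -/
lemma head_sum {a b : ℝ} (ha : -1 < a) (ha' : a < 0) (hb : 1 ≤ b) (M : ℕ) :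
    ∑ m ∈ Finset.range M, (if (m:ℝ)+1 ≤ b then (1+(m:ℝ)) ^ a else 0) ≤
      (2/((a+1) * 2^a)) * b ^ (a+1) := by
  classical
  have hr : (0:ℝ) < a + 1 := by linarith
  have h2a : (0:ℝ) < 2 ^ a := Real.rpow_pos_of_pos two_pos a
  set K := Nat.floor b with hK
  have hsub : (Finset.range M).filter (fun m : ℕ => ((m:ℝ)+1 ≤ b)) ⊆ Finset.range K := by
    intro m hm
    simp only [Finset.mem_filter, Finset.mem_range] at hm ⊢
    have h1 : ((m+1 : ℕ):ℝ) ≤ b := by push_cast; linarith [hm.2]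
    have := Nat.le_floor h1
    omega
  set f : ℕ → ℝ := fun i => (1+(i:ℝ)) ^ (a+1) with hf
  have c0 : (0:ℝ) < 1/((a+1) * 2^a) := div_pos one_pos (mul_pos hr h2a)
  calc ∑ m ∈ Finset.range M, (if (m:ℝ)+1 ≤ b then (1+(m:ℝ)) ^ a else 0)
      = ∑ m ∈ (Finset.range M).filter (fun m : ℕ => ((m:ℝ)+1 ≤ b)), (1+(m:ℝ)) ^ a :=
        (Finset.sum_filter _ _).symm
    _ ≤ ∑ m ∈ Finset.range K, (1+(m:ℝ)) ^ a :=
        Finset.sum_le_sum_of_subset_of_nonneg hsub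
          (fun m _ _ => Real.rpow_nonneg (by positivity) _)
    _ ≤ ∑ m ∈ Finset.range K, (1/((a+1) * 2^a)) * (f (m+1) - f m) := by
        apply Finset.sum_le_sum
        intro m _
        have h1 : (1:ℝ) ≤ 1 + (m:ℝ) := by
          have := Nat.cast_nonneg (α := ℝ) m; linarith
        have h := head_step ha ha' h1
        simp only [hf]
        push_cast
        convert h using 3
        · rfl
        ring
    _ = (1/((a+1) * 2^a)) * (f K - f 0) := by
        rw [← Finset.mul_sum, Finset.sum_range_sub f]
    _ ≤ (2/((a+1) * 2^a)) * b ^ (a+1) := by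
        have hf0 : f 0 = 1 := by simp [hf]
        have hfK : f K ≤ 2 * b ^ (a+1) := by
          have h1 : (1:ℝ) + K ≤ 2 * b := by
            have := Nat.floor_le (le_trans zero_le_one hb)
            linarith
          have h2 : f K ≤ (2*b) ^ (a+1) :=
            Real.rpow_le_rpow (by positivity) h1 hr.le
          have h3 : (2*b) ^ (a+1) = 2 ^ (a+1) * b ^ (a+1) :=
            Real.mul_rpow (by norm_num) (by linarith)
          have h4 : (2:ℝ) ^ (a+1) ≤ 2 := by
            calc (2:ℝ) ^ (a+1) ≤ 2 ^ (1:ℝ) :=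
                  Real.rpow_le_rpow_of_exponent_le one_le_two (by linarith)
              _ = 2 := Real.rpow_one 2
          calc f K ≤ (2*b) ^ (a+1) := h2
            _ = 2 ^ (a+1) * b ^ (a+1) := h3
            _ ≤ 2 * b ^ (a+1) := by
                apply mul_le_mul_of_nonneg_right h4 (Real.rpow_nonneg (by linarith) _)
        have hb1 : 0 ≤ b ^ (a+1) := Real.rpow_nonneg (by linarith) _
        calc (1/((a+1) * 2^a)) * (f K - f 0) ≤ (1/((a+1) * 2^a)) * (2 * b ^ (a+1)) := by
              apply mul_le_mul_of_nonneg_left _ c0.le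
              rw [hf0]; linarith
          _ = (2/((a+1) * 2^a)) * b ^ (a+1) := by ring
/-- Main one-dimensional estimate:
`∑_m (1+m)^a (b+m)^{-p} ≤ C b^{a+1-p}` for `a > -1`, `p > a+1`, `b ≥ 1`. -/
lemma L0 {a p : ℝ} (ha : -1 < a) (hp : a + 1 < p) :
    ∃ C : ℝ≥0, 0 < C ∧ ∀ b : ℝ, 1 ≤ b →
      ∑' m : ℕ, ENNReal.ofReal ((1+(m:ℝ)) ^ a * (b+(m:ℝ)) ^ (-p)) ≤
        (C : ℝ≥0∞) * ENNReal.ofReal (b ^ (a+1-p)) := by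
  have hq : 1 < p - a := by linarith
  rcases le_or_gt 0 a with ha0 | ha0
  · -- case a ≥ 0 : direct comparison with the tail sum
    refine ⟨(2 ^ (p-a) / (p-a-1)).toNNReal, ?_, ?_⟩
    · rw [Real.toNNReal_pos]
      exact div_pos (Real.rpow_pos_of_pos two_pos _) (by linarith)
    intro b hb
    have hb0 : (0:ℝ) < b := lt_of_lt_of_le one_pos hb
    have hterm : ∀ m : ℕ, (1+(m:ℝ)) ^ a * (b+(m:ℝ)) ^ (-p) ≤ (b+(m:ℝ)) ^ (-(p-a)) := by
      intro m
      have hm0 : (0:ℝ) ≤ m := Nat.cast_nonneg m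
      have h1 : (1+(m:ℝ)) ^ a ≤ (b+(m:ℝ)) ^ a :=
        Real.rpow_le_rpow (by linarith) (by linarith) ha0
      have h2 : (b+(m:ℝ)) ^ a * (b+(m:ℝ)) ^ (-p) = (b+(m:ℝ)) ^ (-(p-a)) := by
        rw [← Real.rpow_add (by linarith)]; ring_nf
      calc (1+(m:ℝ)) ^ a * (b+(m:ℝ)) ^ (-p)
          ≤ (b+(m:ℝ)) ^ a * (b+(m:ℝ)) ^ (-p) :=
            mul_le_mul_of_nonneg_right h1 (Real.rpow_nonneg (by linarith) _)
        _ = (b+(m:ℝ)) ^ (-(p-a)) := h2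
    calc ∑' m : ℕ, ENNReal.ofReal ((1+(m:ℝ)) ^ a * (b+(m:ℝ)) ^ (-p))
        ≤ ∑' m : ℕ, ENNReal.ofReal ((b+(m:ℝ)) ^ (-(p-a))) :=
          ENNReal.tsum_le_tsum (fun m => ENNReal.ofReal_le_ofReal (hterm m))
      _ ≤ ENNReal.ofReal ((2 ^ (p-a) / (p-a-1)) * b ^ (-(p-a-1))) := tail_sum hq hb
      _ = (((2 ^ (p-a) / (p-a-1)).toNNReal : ℝ≥0) : ℝ≥0∞) * ENNReal.ofReal (b ^ (a+1-p)) := by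
          have hcnn : (0:ℝ) ≤ 2 ^ (p-a) / (p-a-1) :=
            le_of_lt (div_pos (Real.rpow_pos_of_pos two_pos _) (by linarith))
          have hco : (((2 ^ (p-a) / (p-a-1)).toNNReal : ℝ≥0) : ℝ≥0∞) =
              ENNReal.ofReal (2 ^ (p-a) / (p-a-1)) := rfl
          rw [hco, ← ENNReal.ofReal_mul hcnn]
          congr 1
          have he : -(p-a-1) = a+1-p := by ring
          rw [he]
  · -- case -1 < a < 0 : split into head and tail
    set c1 : ℝ := (2/((a+1) * 2^a)) with hc1
    set c2 : ℝ := 2 ^ (-a) * (2 ^ (p-a) / (p-a-1)) with hc2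
    have hr : (0:ℝ) < a + 1 := by linarith
    have h2a : (0:ℝ) < 2 ^ a := Real.rpow_pos_of_pos two_pos a
    have hc1pos : 0 < c1 := div_pos two_pos (mul_pos hr h2a)
    have hc2pos : 0 < c2 := mul_pos (Real.rpow_pos_of_pos two_pos _)
      (div_pos (Real.rpow_pos_of_pos two_pos _) (by linarith))
    refine ⟨(c1 + c2).toNNReal, by rw [Real.toNNReal_pos]; linarith, ?_⟩
    intro b hb
    have hb0 : (0:ℝ) < b := lt_of_lt_of_le one_pos hb
    set u : ℕ → ℝ := fun m => (if (m:ℝ)+1 ≤ b then (1+(m:ℝ)) ^ a else 0) * b ^ (-p) with hu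
    set v : ℕ → ℝ := fun m => 2 ^ (-a) * (b+(m:ℝ)) ^ (-(p-a)) with hv
    have hunn : ∀ m, 0 ≤ u m := by
      intro m; simp only [hu]
      apply mul_nonneg _ (Real.rpow_nonneg hb0.le _)
      split
      · exact Real.rpow_nonneg (by positivity) _
      · exact le_rfl
    have hvnn : ∀ m, 0 ≤ v m := fun m => mul_nonneg (Real.rpow_nonneg two_pos.le _)
      (Real.rpow_nonneg (by positivity) _)
    have hterm : ∀ m : ℕ, (1+(m:ℝ)) ^ a * (b+(m:ℝ)) ^ (-p) ≤ u m + v m := by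
      intro m
      have hm0 : (0:ℝ) ≤ m := Nat.cast_nonneg m
      rcases le_or_gt ((m:ℝ)+1) b with hcase | hcase
      · have h1 : (b+(m:ℝ)) ^ (-p) ≤ b ^ (-p) :=
          Real.rpow_le_rpow_of_nonpos hb0 (by linarith) (by linarith)
        have : (1+(m:ℝ)) ^ a * (b+(m:ℝ)) ^ (-p) ≤ u m := by
          simp only [hu, if_pos hcase]
          exact mul_le_mul_of_nonneg_left h1 (Real.rpow_nonneg (by positivity) _)
        linarith [hvnn m]
      · have hble : b + (m:ℝ) ≤ 2*(1+(m:ℝ)) := by linarith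
        have h1 : (2*(1+(m:ℝ))) ^ a ≤ (b+(m:ℝ)) ^ a :=
          Real.rpow_le_rpow_of_nonpos (by linarith) hble ha0.le
        have h2 : (2*(1+(m:ℝ))) ^ a = 2 ^ a * (1+(m:ℝ)) ^ a :=
          Real.mul_rpow two_pos.le (by positivity)
        have h3 : (1+(m:ℝ)) ^ a ≤ 2 ^ (-a) * (b+(m:ℝ)) ^ a := by
          have h4 : (2:ℝ) ^ (-a) * 2 ^ a = 1 := by
            rw [← Real.rpow_add two_pos]; norm_num
          calc (1+(m:ℝ)) ^ a = 2 ^ (-a) * (2 ^ a * (1+(m:ℝ)) ^ a) := by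
                rw [← mul_assoc, h4, one_mul]
            _ ≤ 2 ^ (-a) * (b+(m:ℝ)) ^ a := by
                apply mul_le_mul_of_nonneg_left (h2 ▸ h1)
                  (Real.rpow_nonneg two_pos.le _)
        have : (1+(m:ℝ)) ^ a * (b+(m:ℝ)) ^ (-p) ≤ v m := by
          simp only [hv]
          have h5 : (b+(m:ℝ)) ^ a * (b+(m:ℝ)) ^ (-p) = (b+(m:ℝ)) ^ (-(p-a)) := by
            rw [← Real.rpow_add (by linarith)]; ring_nf
          calc (1+(m:ℝ)) ^ a * (b+(m:ℝ)) ^ (-p)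
              ≤ (2 ^ (-a) * (b+(m:ℝ)) ^ a) * (b+(m:ℝ)) ^ (-p) :=
                mul_le_mul_of_nonneg_right h3 (Real.rpow_nonneg (by linarith) _)
            _ = 2 ^ (-a) * (b+(m:ℝ)) ^ (-(p-a)) := by rw [mul_assoc, h5]
        linarith [hunn m]
    have hhead : ∑' m : ℕ, ENNReal.ofReal (u m) ≤ ENNReal.ofReal (c1 * b ^ (a+1-p)) := by
      apply helper_tsum_ofReal_le hunn
      intro M
      have := head_sum ha ha0 hb M
      calc ∑ m ∈ Finset.range M, u m
          = (∑ m ∈ Finset.range M, (if (m:ℝ)+1 ≤ b then (1+(m:ℝ)) ^ a else 0)) * b ^ (-p) := by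
            rw [Finset.sum_mul]
        _ ≤ (c1 * b ^ (a+1)) * b ^ (-p) :=
            mul_le_mul_of_nonneg_right this (Real.rpow_nonneg hb0.le _)
        _ = c1 * b ^ (a+1-p) := by
            rw [mul_assoc, ← Real.rpow_add hb0]; ring_nf
    have htail : ∑' m : ℕ, ENNReal.ofReal (v m) ≤ ENNReal.ofReal (c2 * b ^ (a+1-p)) := by
      calc ∑' m : ℕ, ENNReal.ofReal (v m)
          = ENNReal.ofReal (2 ^ (-a)) * ∑' m : ℕ, ENNReal.ofReal ((b+(m:ℝ)) ^ (-(p-a))) := by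
            rw [← ENNReal.tsum_mul_left]
            congr 1; funext m
            rw [hv, ← ENNReal.ofReal_mul (Real.rpow_nonneg two_pos.le _)]
        _ ≤ ENNReal.ofReal (2 ^ (-a)) * ENNReal.ofReal ((2 ^ (p-a) / (p-a-1)) * b ^ (-(p-a-1))) :=
            mul_le_mul_right (tail_sum hq hb) _
        _ = ENNReal.ofReal (c2 * b ^ (a+1-p)) := by
            rw [← ENNReal.ofReal_mul (Real.rpow_nonneg two_pos.le _), hc2]
            congr 1
            have : -(p-a-1) = a+1-p := by ring
            rw [this]; ring
    calc ∑' m : ℕ, ENNReal.ofReal ((1+(m:ℝ)) ^ a * (b+(m:ℝ)) ^ (-p))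
        ≤ ∑' m : ℕ, ENNReal.ofReal (u m + v m) :=
          ENNReal.tsum_le_tsum (fun m => ENNReal.ofReal_le_ofReal (hterm m))
      _ = ∑' m : ℕ, (ENNReal.ofReal (u m) + ENNReal.ofReal (v m)) := by
          congr 1; funext m; rw [ENNReal.ofReal_add (hunn m) (hvnn m)]
      _ = (∑' m : ℕ, ENNReal.ofReal (u m)) + ∑' m : ℕ, ENNReal.ofReal (v m) :=
          ENNReal.tsum_add
      _ ≤ ENNReal.ofReal (c1 * b ^ (a+1-p)) + ENNReal.ofReal (c2 * b ^ (a+1-p)) :=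
          add_le_add hhead htail
      _ = (((c1 + c2).toNNReal : ℝ≥0) : ℝ≥0∞) * ENNReal.ofReal (b ^ (a+1-p)) := by
          have hX : (0:ℝ) ≤ b ^ (a+1-p) := Real.rpow_nonneg hb0.le _
          have hco : (((c1 + c2).toNNReal : ℝ≥0) : ℝ≥0∞) = ENNReal.ofReal (c1 + c2) := rfl
          rw [← ENNReal.ofReal_add (mul_nonneg hc1pos.le hX) (mul_nonneg hc2pos.le hX),
            hco, ← ENNReal.ofReal_mul (by linarith)]
          congr 1
          ring
/-- Sup norm of a lattice point. -/
def msup {ι : Type*} [Fintype ι] (ν : ι → ℤ) : ℕ := Finset.univ.sup fun i => (ν i).natAbs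

/-- Lattice box of radius `m`. -/
def boxF (ι : Type*) [Fintype ι] [DecidableEq ι] (m : ℕ) : Finset (ι → ℤ) :=
  Fintype.piFinset fun _ => Finset.Icc (-(m:ℤ)) m

lemma le_msup {ι : Type*} [Fintype ι] (ν : ι → ℤ) (i : ι) : (ν i).natAbs ≤ msup ν := by
  unfold msup
  exact Finset.le_sup (f := fun j => (ν j).natAbs) (Finset.mem_univ i)

lemma msup_le {ι : Type*} [Fintype ι] {ν : ι → ℤ} {m : ℕ} (h : ∀ i, (ν i).natAbs ≤ m) :
    msup ν ≤ m := by
  unfold msup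
  exact Finset.sup_le fun i _ => h i

lemma mem_boxF {ι : Type*} [Fintype ι] [DecidableEq ι] {ν : ι → ℤ} {m : ℕ} :
    ν ∈ boxF ι m ↔ ∀ i, (ν i).natAbs ≤ m := by
  simp only [boxF, Fintype.mem_piFinset, Finset.mem_Icc]
  exact forall_congr' fun i => by omega

lemma card_boxF (ι : Type*) [Fintype ι] [DecidableEq ι] (m : ℕ) :
    (boxF ι m).card = (2*m+1) ^ Fintype.card ι := by
  simp only [boxF, Fintype.card_piFinset, Int.card_Icc]
  have : ((m:ℤ) + 1 - -(m:ℤ)).toNat = 2*m+1 := by omega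
  rw [this, Finset.prod_const, Finset.card_univ]

lemma nat_pow_aux (b : ℕ) : ∀ d : ℕ, (b+2)^(d+1) ≤ b^(d+1) + 2*(d+1)*(b+2)^d := by
  intro d
  induction d with
  | zero => simp
  | succ k ih =>
      have h1 : (b+2)^(k+2) = (b+2)^(k+1) * (b+2) := by ring
      have h2 : b^(k+1) * (b+2) = b^(k+2) + 2 * b^(k+1) := by ring
      have h3 : b^(k+1) ≤ (b+2)^(k+1) := Nat.pow_le_pow_left (by omega) _
      calc (b+2)^(k+2) = (b+2)^(k+1) * (b+2) := h1
        _ ≤ (b^(k+1) + 2*(k+1)*(b+2)^k) * (b+2) := Nat.mul_le_mul_right _ ih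
        _ = b^(k+1) * (b+2) + 2*(k+1)*(b+2)^(k+1) := by ring
        _ = b^(k+2) + 2 * b^(k+1) + 2*(k+1)*(b+2)^(k+1) := by rw [h2]; try ring
        _ ≤ b^(k+2) + 2 * (b+2)^(k+1) + 2*(k+1)*(b+2)^(k+1) := by
            gcongr
            all_goals try omega
        _ = b^(k+2) + 2*(k+2)*(b+2)^(k+1) := by ring

/-- Shell decomposition bound for lattice sums. -/
lemma shell_tsum {ι : Type*} [Fintype ι] [Nonempty ι] (g : ℕ → ℝ≥0∞) :
    ∑' ν : ι → ℤ, g (msup ν) ≤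
      ∑' m : ℕ, ((2 * Fintype.card ι * (2*m+1)^(Fintype.card ι - 1) : ℕ) : ℝ≥0∞) * g m := by
  classical
  set d := Fintype.card ι with hd
  have hd1 : 1 ≤ d := Fintype.card_pos
  -- finiteness of fibers
  have hsubbox : ∀ m : ℕ, ∀ ν : ι → ℤ, msup ν = m → ν ∈ boxF ι m := by
    intro m ν hν
    rw [mem_boxF]
    intro i
    rw [← hν]
    exact le_msup ν i
  have hfin : ∀ m : ℕ, ({ν : ι → ℤ | msup ν = m}).Finite := fun m =>
    Set.Finite.subset (boxF ι m).finite_toSet (fun ν hν => hsubbox m ν hν)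
  haveI : ∀ m : ℕ, Fintype {ν : ι → ℤ // msup ν = m} := fun m => (hfin m).fintype
  -- cardinality bound
  have hcard : ∀ m : ℕ, Fintype.card {ν : ι → ℤ // msup ν = m} ≤ 2*d*(2*m+1)^(d-1) := by
    intro m
    rcases Nat.eq_zero_or_pos m with hm | hm
    · subst hm
      have hinj : Function.Injective
          (fun x : {ν : ι → ℤ // msup ν = 0} => (⟨x.1, hsubbox 0 x.1 x.2⟩ : ↑(boxF ι 0))) :=
        fun x y hxy => Subtype.ext (by simpa [Subtype.ext_iff] using hxy)
      calc Fintype.card {ν : ι → ℤ // msup ν = 0} ≤ Fintype.card ↑(boxF ι 0) :=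
            Fintype.card_le_of_injective _ hinj
        _ = (boxF ι 0).card := Fintype.card_coe _
        _ = 1 := by rw [card_boxF]; norm_num
        _ ≤ 2*d*(2*0+1)^(d-1) := by simp; omega
    · -- m ≥ 1 : fiber embeds into the shell `boxF m \ boxF (m-1)`
      have hmem : ∀ x : {ν : ι → ℤ // msup ν = m}, x.1 ∈ boxF ι m \ boxF ι (m-1) := by
        intro x
        rw [Finset.mem_sdiff]
        refine ⟨hsubbox m x.1 x.2, ?_⟩
        intro hx
        rw [mem_boxF] at hx
        have : msup x.1 ≤ m - 1 := msup_le hx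
        omega
      have hinj : Function.Injective
          (fun x : {ν : ι → ℤ // msup ν = m} => (⟨x.1, hmem x⟩ : ↑(boxF ι m \ boxF ι (m-1)))) :=
        fun x y hxy => Subtype.ext (by simpa [Subtype.ext_iff] using hxy)
      have hsub : boxF ι (m-1) ⊆ boxF ι m := by
        intro ν hν
        rw [mem_boxF] at hν ⊢
        exact fun i => le_trans (hν i) (by omega)
      have hcards : (boxF ι m \ boxF ι (m-1)).card = (2*m+1)^d - (2*(m-1)+1)^d := by
        rw [Finset.card_sdiff_of_subset hsub, card_boxF, card_boxF]
      have hpow : (2*m+1)^d ≤ (2*(m-1)+1)^d + 2*d*(2*m+1)^(d-1) := by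
        have hb : 2*(m-1)+1+2 = 2*m+1 := by omega
        have := nat_pow_aux (2*(m-1)+1) (d-1)
        rw [hb] at this
        have hd' : d - 1 + 1 = d := by omega
        rw [hd'] at this
        omega
      calc Fintype.card {ν : ι → ℤ // msup ν = m}
          ≤ Fintype.card ↑(boxF ι m \ boxF ι (m-1)) := Fintype.card_le_of_injective _ hinj
        _ = (boxF ι m \ boxF ι (m-1)).card := Fintype.card_coe _
        _ ≤ 2*d*(2*m+1)^(d-1) := by rw [hcards]; omega
  -- decompose the sum over fibers
  calc ∑' ν : ι → ℤ, g (msup ν)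
      = ∑' x : (Σ m : ℕ, {ν : ι → ℤ // msup ν = m}), g (msup ((Equiv.sigmaFiberEquiv msup) x)) :=
        ((Equiv.sigmaFiberEquiv (msup : (ι → ℤ) → ℕ)).tsum_eq (fun ν => g (msup ν))).symm
    _ = ∑' m : ℕ, ∑' x : {ν : ι → ℤ // msup ν = m}, g m := by
        rw [ENNReal.tsum_sigma']
        congr 1; funext m
        congr 1; funext x
        simp [Equiv.sigmaFiberEquiv, x.2]
    _ ≤ ∑' m : ℕ, ((2*d*(2*m+1)^(d-1) : ℕ) : ℝ≥0∞) * g m := by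
        apply ENNReal.tsum_le_tsum
        intro m
        rw [tsum_fintype, Finset.sum_const, Finset.card_univ, nsmul_eq_mul]
        exact mul_le_mul_left (by exact_mod_cast Nat.cast_le.mpr (hcard m)) _
lemma zn_nonneg (n : ℕ) (ν : Fin n → ℤ) : 0 ≤ zn n ν := Real.sqrt_nonneg _

lemma natAbs_le_zn {n : ℕ} (ν : Fin n → ℤ) (i : Fin n) : (((ν i).natAbs : ℕ) : ℝ) ≤ zn n ν := by
  calc (((ν i).natAbs : ℕ) : ℝ) = |((ν i : ℤ) : ℝ)| := by
        rw [Nat.cast_natAbs, Int.cast_abs]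
    _ = Real.sqrt ((((ν i : ℤ) : ℝ))^2) := (Real.sqrt_sq_eq_abs _).symm
    _ ≤ Real.sqrt (∑ k, (((ν k : ℤ) : ℝ))^2) :=
        Real.sqrt_le_sqrt (Finset.single_le_sum (f := fun k : Fin n => (((ν k : ℤ) : ℝ))^2) (fun k _ => sq_nonneg _) (Finset.mem_univ i))
    _ = zn n ν := rfl

/-- Abstract lattice-sum bound obtained by combining shells with the 1-d estimate. -/
lemma SB {ι : Type*} [Fintype ι] [Nonempty ι] {p γ r : ℝ} (hγ : 0 ≤ γ)
    (R : (ι → ℤ) → ℝ) (hR : ∀ ν, ((msup ν : ℕ) : ℝ) ≤ R ν) (hR0 : ∀ ν, 0 ≤ R ν)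
    (ha : -1 < (Fintype.card ι : ℝ) - 1 - γ) (hp : (Fintype.card ι : ℝ) - γ < p)
    (hr : (Fintype.card ι : ℝ) - γ - p = r) :
    ∃ C : ℝ≥0, 0 < C ∧ ∀ b : ℝ, 1 ≤ b →
      ∑' ν : ι → ℤ, ENNReal.ofReal ((b + R ν) ^ (-p) * (1 + R ν) ^ (-γ)) ≤
        (C : ℝ≥0∞) * ENNReal.ofReal (b ^ r) := by
  set d := Fintype.card ι with hd
  have hd1 : 1 ≤ d := Fintype.card_pos
  set a : ℝ := (d:ℝ) - 1 - γ with hadef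
  have ha' : -1 < (d:ℝ) - 1 - γ := by rw [← hadef]; exact ha
  have hp0 : 0 < p := by linarith
  obtain ⟨C0, hC0pos, hC0⟩ := L0 (a := a) (p := p) ha (by rw [hadef]; linarith)
  set csh : ℕ := 2*d*3^(d-1) with hcsh
  refine ⟨(csh : ℝ≥0) * C0, by positivity, ?_⟩
  intro b hb
  have hb0 : (0:ℝ) < b := lt_of_lt_of_le one_pos hb
  set g : ℕ → ℝ≥0∞ := fun m => ENNReal.ofReal ((b + (m:ℝ)) ^ (-p) * (1 + (m:ℝ)) ^ (-γ))
    with hg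
  have step1 : ∑' ν : ι → ℤ, ENNReal.ofReal ((b + R ν) ^ (-p) * (1 + R ν) ^ (-γ)) ≤
      ∑' ν : ι → ℤ, g (msup ν) := by
    apply ENNReal.tsum_le_tsum
    intro ν
    apply ENNReal.ofReal_le_ofReal
    have hm : ((msup ν : ℕ) : ℝ) ≤ R ν := hR ν
    have hm0 : (0:ℝ) ≤ (msup ν : ℕ) := Nat.cast_nonneg _
    apply mul_le_mul
    · exact Real.rpow_le_rpow_of_nonpos (by linarith) (by linarith) (by linarith)
    · exact Real.rpow_le_rpow_of_nonpos (by linarith) (by linarith) (by linarith)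
    · exact Real.rpow_nonneg (by linarith [hR0 ν]) _
    · exact Real.rpow_nonneg (by linarith) _
  have step2 : ∑' ν : ι → ℤ, g (msup ν) ≤
      ∑' m : ℕ, ((2*d*(2*m+1)^(d-1) : ℕ) : ℝ≥0∞) * g m := shell_tsum g
  have step3 : ∀ m : ℕ, ((2*d*(2*m+1)^(d-1) : ℕ) : ℝ≥0∞) * g m ≤
      ((csh : ℕ) : ℝ≥0∞) * ENNReal.ofReal ((1+(m:ℝ)) ^ a * (b+(m:ℝ)) ^ (-p)) := by
    intro m
    have h1m : (0:ℝ) < 1 + (m:ℝ) := by positivity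
    have hkey : ((2*d*(2*m+1)^(d-1) : ℕ) : ℝ) ≤ (csh : ℝ) * (1+(m:ℝ)) ^ ((d:ℝ)-1) := by
      have h32 : (1+(m:ℝ))^(d-1:ℕ) = (1+(m:ℝ)) ^ ((d:ℝ)-1) := by
        rw [← Real.rpow_natCast (1+(m:ℝ)) (d-1)]
        congr 1
        push_cast [Nat.cast_sub hd1]
        ring
      have h31 : ((2*m+1 : ℕ) : ℝ) ^ (d-1 : ℕ) ≤ (3:ℝ)^(d-1:ℕ) * (1+(m:ℝ))^(d-1:ℕ) := by
        rw [← mul_pow]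
        apply pow_le_pow_left₀ (by positivity)
        push_cast; linarith
      calc ((2*d*(2*m+1)^(d-1) : ℕ) : ℝ) = 2 * (d:ℝ) * ((2*m+1 : ℕ) : ℝ)^(d-1:ℕ) := by
            push_cast; ring
        _ ≤ 2 * (d:ℝ) * ((3:ℝ)^(d-1:ℕ) * (1+(m:ℝ))^(d-1:ℕ)) := by
            apply mul_le_mul_of_nonneg_left h31 (by positivity)
        _ = (csh : ℝ) * (1+(m:ℝ)) ^ ((d:ℝ)-1) := by
            rw [← h32, hcsh]; push_cast; ring
    have hA : ((2*d*(2*m+1)^(d-1) : ℕ) : ℝ≥0∞) ≤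
        ENNReal.ofReal ((csh : ℝ) * (1+(m:ℝ)) ^ ((d:ℝ)-1)) := by
      rw [← ENNReal.ofReal_natCast]
      exact ENNReal.ofReal_le_ofReal hkey
    calc ((2*d*(2*m+1)^(d-1) : ℕ) : ℝ≥0∞) * g m
        ≤ ENNReal.ofReal ((csh : ℝ) * (1+(m:ℝ)) ^ ((d:ℝ)-1)) * g m := mul_le_mul_left hA _
      _ = ENNReal.ofReal (((csh : ℝ) * (1+(m:ℝ)) ^ ((d:ℝ)-1)) *
            ((b + (m:ℝ)) ^ (-p) * (1 + (m:ℝ)) ^ (-γ))) := by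
          rw [hg, ← ENNReal.ofReal_mul (by positivity)]
      _ = ((csh : ℕ) : ℝ≥0∞) * ENNReal.ofReal ((1+(m:ℝ)) ^ a * (b+(m:ℝ)) ^ (-p)) := by
          rw [show ((csh:ℝ) * (1+(m:ℝ)) ^ ((d:ℝ)-1)) * ((b + (m:ℝ)) ^ (-p) * (1 + (m:ℝ)) ^ (-γ))
              = (csh:ℝ) * ((1+(m:ℝ)) ^ (((d:ℝ)-1) + (-γ)) * (b+(m:ℝ)) ^ (-p)) by
            rw [Real.rpow_add h1m]; ring]
          rw [ENNReal.ofReal_mul (by positivity), ENNReal.ofReal_natCast,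
            show ((d:ℝ)-1) + (-γ) = a by rw [hadef]; ring]
  calc ∑' ν : ι → ℤ, ENNReal.ofReal ((b + R ν) ^ (-p) * (1 + R ν) ^ (-γ))
      ≤ ∑' m : ℕ, ((2*d*(2*m+1)^(d-1) : ℕ) : ℝ≥0∞) * g m := le_trans step1 step2
    _ ≤ ∑' m : ℕ, ((csh : ℕ) : ℝ≥0∞) * ENNReal.ofReal ((1+(m:ℝ)) ^ a * (b+(m:ℝ)) ^ (-p)) :=
        ENNReal.tsum_le_tsum step3
    _ = ((csh : ℕ) : ℝ≥0∞) * ∑' m : ℕ, ENNReal.ofReal ((1+(m:ℝ)) ^ a * (b+(m:ℝ)) ^ (-p)) :=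
        ENNReal.tsum_mul_left
    _ ≤ ((csh : ℕ) : ℝ≥0∞) * ((C0 : ℝ≥0∞) * ENNReal.ofReal (b ^ (a+1-p))) :=
        mul_le_mul_right (hC0 b hb) _
    _ = (((csh : ℝ≥0) * C0 : ℝ≥0) : ℝ≥0∞) * ENNReal.ofReal (b ^ r) := by
        rw [← hr, show (d:ℝ) - γ - p = a + 1 - p by rw [hadef]; ring]
        push_cast
        ring
/-- Bound (a): sum over the last `N'` blocks. -/
lemma B1 (n N' : ℕ) (hn : 1 ≤ n) (hN' : 1 ≤ N') :
    ∃ C : ℝ≥0, 0 < C ∧ ∀ b : ℝ, 1 ≤ b →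
      ∑' η : Fin N' → Fin n → ℤ,
        ENNReal.ofReal ((b + ∑ j, zn n (η j)) ^ (-(((N':ℝ)+1) * n / 2)) *
          (1 + ∑ j, zn n (η j)) ^ (-((N':ℝ) * n / 2))) ≤
        (C : ℝ≥0∞) * ENNReal.ofReal (b ^ (-((n:ℝ)/2))) := by
  haveI : NeZero n := ⟨by omega⟩
  haveI : NeZero N' := ⟨by omega⟩
  have hcard : (Fintype.card (Fin N' × Fin n) : ℝ) = (N' : ℝ) * n := by
    simp [Fintype.card_prod]
  have hn1 : (1:ℝ) ≤ (n:ℝ) := by exact_mod_cast hn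
  have hN1 : (1:ℝ) ≤ (N':ℝ) := by exact_mod_cast hN'
  have hNn : (1:ℝ) ≤ (N':ℝ) * n := by nlinarith
  have hR : ∀ w : Fin N' × Fin n → ℤ, ((msup w : ℕ) : ℝ) ≤ ∑ j, zn n (fun i => w (j, i)) := by
    intro w
    obtain ⟨q, _, hq⟩ := Finset.exists_mem_eq_sup (Finset.univ : Finset (Fin N' × Fin n))
      Finset.univ_nonempty (fun q => (w q).natAbs)
    have h1 : ((msup w : ℕ) : ℝ) = ((w (q.1, q.2)).natAbs : ℝ) := by
      rw [msup, hq]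
    calc ((msup w : ℕ) : ℝ) = ((w (q.1, q.2)).natAbs : ℝ) := h1
      _ ≤ zn n (fun i => w (q.1, i)) := natAbs_le_zn (fun i => w (q.1, i)) q.2
      _ ≤ ∑ j, zn n (fun i => w (j, i)) :=
          Finset.single_le_sum (f := fun j => zn n (fun i => w (j, i)))
            (fun j _ => zn_nonneg n _) (Finset.mem_univ q.1)
  obtain ⟨C, hCpos, hC⟩ := SB (ι := Fin N' × Fin n)
    (p := ((N':ℝ)+1) * n / 2) (γ := (N':ℝ) * n / 2) (r := -((n:ℝ)/2))
    (by positivity)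
    (fun w => ∑ j, zn n (fun i => w (j, i)))
    hR (fun w => Finset.sum_nonneg fun j _ => zn_nonneg n _)
    (by rw [hcard]; nlinarith) (by rw [hcard]; nlinarith) (by rw [hcard]; ring)
  refine ⟨C, hCpos, fun b hb => ?_⟩
  calc ∑' η : Fin N' → Fin n → ℤ,
        ENNReal.ofReal ((b + ∑ j, zn n (η j)) ^ (-(((N':ℝ)+1) * n / 2)) *
          (1 + ∑ j, zn n (η j)) ^ (-((N':ℝ) * n / 2)))
        = ∑' w : Fin N' × Fin n → ℤ,
            ENNReal.ofReal ((b + ∑ j, zn n (fun i => w (j, i))) ^ (-(((N':ℝ)+1) * n / 2)) *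
              (1 + ∑ j, zn n (fun i => w (j, i))) ^ (-((N':ℝ) * n / 2))) :=
          ((Equiv.curry (Fin N') (Fin n) ℤ).tsum_eq fun η =>
            ENNReal.ofReal ((b + ∑ j, zn n (η j)) ^ (-(((N':ℝ)+1) * n / 2)) *
              (1 + ∑ j, zn n (η j)) ^ (-((N':ℝ) * n / 2)))).symm
      _ ≤ (C : ℝ≥0∞) * ENNReal.ofReal (b ^ (-((n:ℝ)/2))) := hC b hb

/-- Bound (b): sum over the first block. -/
lemma B2 (n N' : ℕ) (hn : 1 ≤ n) (hN' : 1 ≤ N') :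
    ∃ C : ℝ≥0, 0 < C ∧ ∀ b : ℝ, 1 ≤ b →
      ∑' x : Fin n → ℤ,
        ENNReal.ofReal ((b + zn n x) ^ (-(((N':ℝ)+1) * n / 2)) *
          (1 + zn n x) ^ (-((n:ℝ)/2))) ≤
        (C : ℝ≥0∞) * ENNReal.ofReal (b ^ (-((N':ℝ) * n / 2))) := by
  haveI : NeZero n := ⟨by omega⟩
  have hcard : (Fintype.card (Fin n) : ℝ) = (n : ℝ) := by simp
  have hn1 : (1:ℝ) ≤ (n:ℝ) := by exact_mod_cast hn
  have hN1 : (1:ℝ) ≤ (N':ℝ) := by exact_mod_cast hN'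
  have hR : ∀ x : Fin n → ℤ, ((msup x : ℕ) : ℝ) ≤ zn n x := by
    intro x
    obtain ⟨i, _, hi⟩ := Finset.exists_mem_eq_sup (Finset.univ : Finset (Fin n))
      Finset.univ_nonempty (fun i => (x i).natAbs)
    calc ((msup x : ℕ) : ℝ) = ((x i).natAbs : ℝ) := by rw [msup, hi]
      _ ≤ zn n x := natAbs_le_zn x i
  obtain ⟨C, hCpos, hC⟩ := SB (ι := Fin n)
    (p := ((N':ℝ)+1) * n / 2) (γ := (n:ℝ)/2) (r := -((N':ℝ) * n / 2))
    (by positivity)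
    (zn n)
    hR (fun x => zn_nonneg n x)
    (by rw [hcard]; nlinarith) (by rw [hcard]; nlinarith) (by rw [hcard]; ring)
  exact ⟨C, hCpos, hC⟩
lemma enn_two_mul_le (a b : ℝ≥0∞) : 2 * (a * b) ≤ a ^ 2 + b ^ 2 := by
  rcases eq_or_ne a 0 with rfl | ha0
  · simp
  rcases eq_or_ne b 0 with rfl | hb0
  · simp
  rcases eq_or_ne a ⊤ with rfl | hat
  · have h : (⊤:ℝ≥0∞) ^ 2 = ⊤ := by simp [pow_two]
    rw [h]
    exact le_trans le_top (le_add_right le_rfl)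
  rcases eq_or_ne b ⊤ with rfl | hbt
  · have h : (⊤:ℝ≥0∞) ^ 2 = ⊤ := by simp [pow_two]
    rw [h]
    exact le_trans le_top (le_add_left le_rfl)
  lift a to ℝ≥0 using hat
  lift b to ℝ≥0 using hbt
  rw [← ENNReal.coe_mul]
  norm_cast
  rw [← NNReal.coe_le_coe]
  push_cast
  nlinarith [sq_nonneg ((a:ℝ) - (b:ℝ))]

lemma enn_amgm {u v : ℝ≥0∞} (huv : u * v = 1) (a b : ℝ≥0∞) :
    2 * (a * b) ≤ u * a ^ 2 + v * b ^ 2 := by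
  have hsq : ∀ w : ℝ≥0∞, (w ^ (1/2:ℝ)) ^ 2 = w := fun w => by
    rw [← ENNReal.rpow_natCast (w ^ (1/2:ℝ)) 2, ← ENNReal.rpow_mul]
    norm_num
  have huv2 : u ^ (1/2:ℝ) * v ^ (1/2:ℝ) = 1 := by
    rw [← ENNReal.mul_rpow_of_nonneg _ _ (by norm_num : (0:ℝ) ≤ 1/2), huv,
      ENNReal.one_rpow]
  have h := enn_two_mul_le (u ^ (1/2:ℝ) * a) (v ^ (1/2:ℝ) * b)
  have hxy : (u ^ (1/2:ℝ) * a) * (v ^ (1/2:ℝ) * b) = a * b := by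
    calc (u ^ (1/2:ℝ) * a) * (v ^ (1/2:ℝ) * b)
        = (u ^ (1/2:ℝ) * v ^ (1/2:ℝ)) * (a * b) := by ring
      _ = a * b := by rw [huv2, one_mul]
  rw [hxy] at h
  calc 2 * (a * b) ≤ (u ^ (1/2:ℝ) * a) ^ 2 + (v ^ (1/2:ℝ) * b) ^ 2 := h
    _ = u * a ^ 2 + v * b ^ 2 := by rw [mul_pow, mul_pow, hsq u, hsq v]

lemma tsum_pi_prod {X : Type*} : ∀ (k : ℕ) (f : Fin k → X → ℝ≥0∞),
    ∑' η : Fin k → X, ∏ j, f j (η j) = ∏ j, ∑' x : X, f j x := by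
  intro k
  induction k with
  | zero =>
      intro f
      haveI : Unique (Fin 0 → X) := ⟨⟨fun i => i.elim0⟩, fun g => funext fun i => i.elim0⟩
      rw [tsum_eq_single (default : Fin 0 → X)
        (fun b' hb' => absurd (Subsingleton.elim b' default) hb')]
      simp
  | succ k ih =>
      intro f
      have he := (Fin.consEquiv (fun _ : Fin (k+1) => X)).tsum_eq
        (fun η : Fin (k+1) → X => ∏ j, f j (η j))
      rw [← he, ENNReal.tsum_prod']
      have hpt : ∀ (x : X) (η : Fin k → X),
          (∏ j, f j (((Fin.consEquiv (fun _ : Fin (k+1) => X)) (x, η)) j)) =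
            f 0 x * ∏ j : Fin k, f j.succ (η j) := by
        intro x η
        rw [Fin.prod_univ_succ]
        simp [Fin.consEquiv]
      calc (∑' x : X, ∑' η : Fin k → X,
              (fun η' : Fin (k+1) → X => ∏ j, f j (η' j))
                ((Fin.consEquiv (fun _ : Fin (k+1) => X)) (x, η)))
          = ∑' x : X, ∑' η : Fin k → X, f 0 x * ∏ j : Fin k, f j.succ (η j) := by
            congr 1; funext x; congr 1; funext η; exact hpt x η
        _ = ∑' x : X, f 0 x * ∑' η : Fin k → X, ∏ j : Fin k, f j.succ (η j) := by
            congr 1; funext x; exact ENNReal.tsum_mul_left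
        _ = (∑' x : X, f 0 x) * ∑' η : Fin k → X, ∏ j : Fin k, f j.succ (η j) :=
            ENNReal.tsum_mul_right
        _ = ∏ j, ∑' x : X, f j x := by
            rw [ih, ← Fin.prod_univ_succ (fun j => ∑' x : X, f j x)]

lemma enn_rpow_half_le (x : ℝ≥0∞) : x ^ (1/2:ℝ) ≤ 1 + x := by
  rcases le_total x 1 with hx | hx
  · calc x ^ (1/2:ℝ) ≤ (1:ℝ≥0∞) ^ (1/2:ℝ) := ENNReal.rpow_le_rpow hx (by norm_num)
      _ = 1 := ENNReal.one_rpow _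
      _ ≤ 1 + x := le_add_right le_rfl
  · calc x ^ (1/2:ℝ) ≤ x ^ (1:ℝ) := ENNReal.rpow_le_rpow_of_exponent_le hx (by norm_num)
      _ = x := ENNReal.rpow_one x
      _ ≤ 1 + x := le_add_left le_rfl
/-- Abstract bilinear Schur-test style estimate in `ℝ≥0∞`. -/
lemma core {X Y : Type*} (K : X → Y → ℝ≥0∞) (a : X → ℝ≥0∞) (b : Y → ℝ≥0∞)
    (P P' : X → ℝ≥0∞) (Q Q' : Y → ℝ≥0∞) (C₁ C₂ : ℝ≥0) (U V : ℝ≥0∞)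
    (hPP' : ∀ x, P x * P' x = 1) (hQQ' : ∀ y, Q y * Q' y = 1)
    (h1 : ∀ x, ∑' y, K x y * (P x * Q y) ≤ (C₁ : ℝ≥0∞))
    (h2 : ∀ y, ∑' x, K x y * (P' x * Q' y) ≤ (C₂ : ℝ≥0∞))
    (hU : ∑' x, (a x) ^ 2 = U) (hV : ∑' y, (b y) ^ 2 = V)
    (hU0 : U ≠ 0) (hUt : U ≠ ⊤) (hV0 : V ≠ 0) (hVt : V ≠ ⊤)
    (hC₁ : C₁ ≠ 0) (hC₂ : C₂ ≠ 0) :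
    ∑' x, ∑' y, K x y * (a x * b y) ≤
      ((C₁ : ℝ≥0∞) * U) ^ (1/2:ℝ) * ((C₂ : ℝ≥0∞) * V) ^ (1/2:ℝ) := by
  have hhalf : ∀ w : ℝ≥0∞, w ≠ 0 → w ≠ ⊤ →
      w ^ (1/2:ℝ) ≠ 0 ∧ w ^ (1/2:ℝ) ≠ ⊤ ∧ w ^ (1/2:ℝ) * w ^ (1/2:ℝ) = w := by
    intro w h0 ht
    refine ⟨?_, ?_, ?_⟩
    · exact (ENNReal.rpow_pos (pos_iff_ne_zero.mpr h0) ht).ne'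
    · exact ENNReal.rpow_ne_top_of_nonneg (by norm_num) ht
    · rw [← ENNReal.rpow_add _ _ h0 ht]; norm_num
  set W₁ : ℝ≥0∞ := (C₁ : ℝ≥0∞) * U with hW₁
  set W₂ : ℝ≥0∞ := (C₂ : ℝ≥0∞) * V with hW₂
  have hW₁0 : W₁ ≠ 0 := mul_ne_zero (by exact_mod_cast hC₁) hU0
  have hW₁t : W₁ ≠ ⊤ := ENNReal.mul_ne_top ENNReal.coe_ne_top hUt
  have hW₂0 : W₂ ≠ 0 := mul_ne_zero (by exact_mod_cast hC₂) hV0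
  have hW₂t : W₂ ≠ ⊤ := ENNReal.mul_ne_top ENNReal.coe_ne_top hVt
  obtain ⟨hs₁0, hs₁t, hs₁⟩ := hhalf W₁ hW₁0 hW₁t
  obtain ⟨hs₂0, hs₂t, hs₂⟩ := hhalf W₂ hW₂0 hW₂t
  set lam : ℝ≥0∞ := W₂ ^ (1/2:ℝ) * (W₁ ^ (1/2:ℝ))⁻¹ with hlam
  have hlam0 : lam ≠ 0 := mul_ne_zero hs₂0 (ENNReal.inv_ne_zero.mpr hs₁t)
  have hlamt : lam ≠ ⊤ := ENNReal.mul_ne_top hs₂t (ENNReal.inv_ne_top.mpr hs₁0)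
  -- pointwise AM-GM
  have hpt : ∀ (x : X) (y : Y), 2 * (K x y * (a x * b y)) ≤
      K x y * ((lam * (P x * Q y)) * (a x) ^ 2) +
        K x y * ((lam⁻¹ * (P' x * Q' y)) * (b y) ^ 2) := by
    intro x y
    have huv : (lam * (P x * Q y)) * (lam⁻¹ * (P' x * Q' y)) = 1 := by
      calc (lam * (P x * Q y)) * (lam⁻¹ * (P' x * Q' y))
          = (lam * lam⁻¹) * ((P x * P' x) * (Q y * Q' y)) := by ring
        _ = 1 := by rw [ENNReal.mul_inv_cancel hlam0 hlamt, hPP', hQQ']; norm_num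
    calc 2 * (K x y * (a x * b y)) = K x y * (2 * (a x * b y)) := by ring
      _ ≤ K x y * ((lam * (P x * Q y)) * (a x) ^ 2 + (lam⁻¹ * (P' x * Q' y)) * (b y) ^ 2) :=
          mul_le_mul_right (enn_amgm huv (a x) (b y)) _
      _ = K x y * ((lam * (P x * Q y)) * (a x) ^ 2) +
            K x y * ((lam⁻¹ * (P' x * Q' y)) * (b y) ^ 2) := by ring
  -- term 1
  have hT1 : (∑' x, ∑' y, K x y * ((lam * (P x * Q y)) * (a x) ^ 2)) ≤ lam * (C₁ : ℝ≥0∞) * U := by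
    have hx : ∀ x, (∑' y, K x y * ((lam * (P x * Q y)) * (a x) ^ 2)) ≤
        (lam * (C₁ : ℝ≥0∞)) * (a x) ^ 2 := by
      intro x
      calc (∑' y, K x y * ((lam * (P x * Q y)) * (a x) ^ 2))
          = (lam * (a x) ^ 2) * ∑' y, K x y * (P x * Q y) := by
            rw [← ENNReal.tsum_mul_left]
            exact tsum_congr fun y => by ring
        _ ≤ (lam * (a x) ^ 2) * (C₁ : ℝ≥0∞) := mul_le_mul_right (h1 x) _
        _ = (lam * (C₁ : ℝ≥0∞)) * (a x) ^ 2 := by ring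
    calc (∑' x, ∑' y, K x y * ((lam * (P x * Q y)) * (a x) ^ 2))
        ≤ ∑' x, (lam * (C₁ : ℝ≥0∞)) * (a x) ^ 2 := ENNReal.tsum_le_tsum hx
      _ = (lam * (C₁ : ℝ≥0∞)) * U := by rw [ENNReal.tsum_mul_left, hU]
      _ = lam * (C₁ : ℝ≥0∞) * U := by ring
  -- term 2
  have hT2 : (∑' x, ∑' y, K x y * ((lam⁻¹ * (P' x * Q' y)) * (b y) ^ 2)) ≤
      lam⁻¹ * (C₂ : ℝ≥0∞) * V := by
    rw [ENNReal.tsum_comm]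
    have hy : ∀ y, (∑' x, K x y * ((lam⁻¹ * (P' x * Q' y)) * (b y) ^ 2)) ≤
        (lam⁻¹ * (C₂ : ℝ≥0∞)) * (b y) ^ 2 := by
      intro y
      calc (∑' x, K x y * ((lam⁻¹ * (P' x * Q' y)) * (b y) ^ 2))
          = (lam⁻¹ * (b y) ^ 2) * ∑' x, K x y * (P' x * Q' y) := by
            rw [← ENNReal.tsum_mul_left]
            exact tsum_congr fun x => by ring
        _ ≤ (lam⁻¹ * (b y) ^ 2) * (C₂ : ℝ≥0∞) := mul_le_mul_right (h2 y) _
        _ = (lam⁻¹ * (C₂ : ℝ≥0∞)) * (b y) ^ 2 := by ring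
    calc (∑' y, ∑' x, K x y * ((lam⁻¹ * (P' x * Q' y)) * (b y) ^ 2))
        ≤ ∑' y, (lam⁻¹ * (C₂ : ℝ≥0∞)) * (b y) ^ 2 := ENNReal.tsum_le_tsum hy
      _ = (lam⁻¹ * (C₂ : ℝ≥0∞)) * V := by rw [ENNReal.tsum_mul_left, hV]
      _ = lam⁻¹ * (C₂ : ℝ≥0∞) * V := by ring
  -- combine
  have key : 2 * (∑' x, ∑' y, K x y * (a x * b y)) ≤ lam * W₁ + lam⁻¹ * W₂ := by
    calc 2 * (∑' x, ∑' y, K x y * (a x * b y))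
        = ∑' x, ∑' y, 2 * (K x y * (a x * b y)) := by
          rw [← ENNReal.tsum_mul_left]
          exact tsum_congr fun x => by rw [← ENNReal.tsum_mul_left]
      _ ≤ ∑' x, ∑' y, (K x y * ((lam * (P x * Q y)) * (a x) ^ 2) +
            K x y * ((lam⁻¹ * (P' x * Q' y)) * (b y) ^ 2)) :=
          ENNReal.tsum_le_tsum fun x => ENNReal.tsum_le_tsum fun y => hpt x y
      _ = (∑' x, ∑' y, K x y * ((lam * (P x * Q y)) * (a x) ^ 2)) +
            ∑' x, ∑' y, K x y * ((lam⁻¹ * (P' x * Q' y)) * (b y) ^ 2) := by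
          rw [← ENNReal.tsum_add]
          exact tsum_congr fun x => ENNReal.tsum_add
      _ ≤ lam * (C₁ : ℝ≥0∞) * U + lam⁻¹ * (C₂ : ℝ≥0∞) * V := add_le_add hT1 hT2
      _ = lam * W₁ + lam⁻¹ * W₂ := by rw [hW₁, hW₂]; ring
  have hsum : lam * W₁ + lam⁻¹ * W₂ = 2 * (W₁ ^ (1/2:ℝ) * W₂ ^ (1/2:ℝ)) := by
    have hlaminv : lam⁻¹ = W₁ ^ (1/2:ℝ) * (W₂ ^ (1/2:ℝ))⁻¹ := by
      rw [hlam, ENNReal.mul_inv (Or.inl hs₂0) (Or.inl hs₂t), inv_inv]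
      ring
    have e1 : lam * W₁ = W₂ ^ (1/2:ℝ) * W₁ ^ (1/2:ℝ) := by
      have h : (W₁ ^ (1/2:ℝ))⁻¹ * W₁ = W₁ ^ (1/2:ℝ) := by
        calc (W₁ ^ (1/2:ℝ))⁻¹ * W₁ = W₁ ^ (-(1/2):ℝ) * W₁ ^ (1:ℝ) := by
              rw [ENNReal.rpow_neg, ENNReal.rpow_one]
          _ = W₁ ^ ((-(1/2) + 1 : ℝ)) := (ENNReal.rpow_add _ _ hW₁0 hW₁t).symm
          _ = W₁ ^ (1/2:ℝ) := by norm_num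
      rw [hlam, mul_assoc, h]
    have e2 : lam⁻¹ * W₂ = W₁ ^ (1/2:ℝ) * W₂ ^ (1/2:ℝ) := by
      have h : (W₂ ^ (1/2:ℝ))⁻¹ * W₂ = W₂ ^ (1/2:ℝ) := by
        calc (W₂ ^ (1/2:ℝ))⁻¹ * W₂ = W₂ ^ (-(1/2):ℝ) * W₂ ^ (1:ℝ) := by
              rw [ENNReal.rpow_neg, ENNReal.rpow_one]
          _ = W₂ ^ ((-(1/2) + 1 : ℝ)) := (ENNReal.rpow_add _ _ hW₂0 hW₂t).symm
          _ = W₂ ^ (1/2:ℝ) := by norm_num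
      rw [hlaminv, mul_assoc, h]
    rw [e1, e2]
    ring
  rw [hsum] at key
  exact (ENNReal.mul_le_mul_iff_right (by norm_num : (2:ℝ≥0∞) ≠ 0) (by norm_num)).mp key



/-- (Lemma 2.4.)
`Σ_{ν_1,…,ν_N} (1+|ν_1|+⋯+|ν_N|)^{−Nn/2} Π_j A_j(ν_j) ≲ Π_j ‖A_j‖_{ℓ²(ℤ^n)}`. -/
theorem statement7 (n N : ℕ) (hn : 1 ≤ n) (hN : 2 ≤ N) :
    ∃ C : ℝ≥0, ∀ A : Fin N → (Fin n → ℤ) → ℝ, (∀ j ν, 0 ≤ A j ν) →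
      (∑' ν : Fin N → Fin n → ℤ,
          ENNReal.ofReal ((1 + ∑ j, zn n (ν j)) ^ (-(N * n / 2 : ℝ))) *
            ∏ j, ENNReal.ofReal (A j (ν j)))
        ≤ C * ∏ j, (∑' μ : Fin n → ℤ, ENNReal.ofReal (A j μ) ^ 2) ^ (1 / 2 : ℝ) := by
  obtain ⟨N', rfl⟩ : ∃ k, N = k + 1 := ⟨N - 1, by omega⟩
  have hN' : 1 ≤ N' := by omega
  obtain ⟨C₁, hC₁pos, hC₁⟩ := B1 n N' hn hN'
  obtain ⟨C₂, hC₂pos, hC₂⟩ := B2 n N' hn hN'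
  refine ⟨(1 + C₁) * (1 + C₂), ?_⟩
  intro A hA
  have hexp : ((N'+1 : ℕ) : ℝ) = (N':ℝ) + 1 := by push_cast; ring
  simp only [hexp]
  have hCne : ((1 + C₁) * (1 + C₂) : ℝ≥0) ≠ 0 := by positivity
  -- degenerate case: some factor vanishes
  by_cases hzero : ∃ j, (∑' μ : Fin n → ℤ, ENNReal.ofReal (A j μ) ^ 2) = 0
  · obtain ⟨j, hj⟩ := hzero
    have hAj : ∀ μ, ENNReal.ofReal (A j μ) = 0 := fun μ =>
      (pow_eq_zero_iff (two_ne_zero)).mp (ENNReal.tsum_eq_zero.mp hj μ)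
    have hz : ∀ ν : Fin (N'+1) → Fin n → ℤ,
        ENNReal.ofReal ((1 + ∑ j', zn n (ν j')) ^ (-(((N':ℝ)+1) * n / 2))) *
          ∏ j', ENNReal.ofReal (A j' (ν j')) = 0 := by
      intro ν
      rw [Finset.prod_eq_zero (Finset.mem_univ j) (hAj (ν j)), mul_zero]
    rw [ENNReal.tsum_eq_zero.mpr hz]
    exact zero_le
  push_neg at hzero
  -- degenerate case: some factor is infinite
  by_cases htop : ∃ j, (∑' μ : Fin n → ℤ, ENNReal.ofReal (A j μ) ^ 2) = ⊤
  · obtain ⟨j, hj⟩ := htop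
    have hRt : (∏ j', (∑' μ : Fin n → ℤ, ENNReal.ofReal (A j' μ) ^ 2) ^ (1/2:ℝ)) = ⊤ := by
      rw [← Finset.prod_erase_mul Finset.univ _ (Finset.mem_univ j), hj,
        ENNReal.top_rpow_of_pos (by norm_num), ENNReal.mul_top]
      refine Finset.prod_ne_zero_iff.mpr fun i _ => ?_
      by_cases hti : (∑' μ : Fin n → ℤ, ENNReal.ofReal (A i μ) ^ 2) = ⊤
      · rw [hti, ENNReal.top_rpow_of_pos (by norm_num)]
        exact ENNReal.top_ne_zero
      · exact (ENNReal.rpow_pos (pos_iff_ne_zero.mpr (hzero i)) hti).ne'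
    rw [hRt, ENNReal.mul_top (by exact_mod_cast hCne)]
    exact le_top
  push_neg at htop
  -- main case
  have hzn1 : ∀ x : Fin n → ℤ, (1:ℝ) ≤ 1 + zn n x := fun x => by
    have := zn_nonneg n x; linarith
  have hS0 : ∀ η : Fin N' → Fin n → ℤ, (0:ℝ) ≤ ∑ j, zn n (η j) :=
    fun η => Finset.sum_nonneg fun j _ => zn_nonneg n _
  have hS1 : ∀ η : Fin N' → Fin n → ℤ, (1:ℝ) ≤ 1 + ∑ j, zn n (η j) := fun η => by
    have := hS0 η; linarith
  have hone : ∀ (t e : ℝ), 1 ≤ t →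
      ENNReal.ofReal (t ^ e) * ENNReal.ofReal (t ^ (-e)) = 1 := by
    intro t e ht
    have ht0 : (0:ℝ) < t := by linarith
    rw [← ENNReal.ofReal_mul (Real.rpow_nonneg ht0.le _), ← Real.rpow_add ht0]
    norm_num
  -- the two Schur conditions
  have h1 : ∀ x : Fin n → ℤ,
      (∑' y : Fin N' → Fin n → ℤ,
        ENNReal.ofReal ((1 + (zn n x + ∑ j, zn n (y j))) ^ (-(((N':ℝ)+1) * n / 2))) *
          (ENNReal.ofReal ((1 + zn n x) ^ ((n:ℝ)/2)) *
            ENNReal.ofReal ((1 + ∑ j, zn n (y j)) ^ (-((N':ℝ) * n / 2))))) ≤ (C₁ : ℝ≥0∞) := by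
    intro x
    have hb := hzn1 x
    calc (∑' y : Fin N' → Fin n → ℤ,
        ENNReal.ofReal ((1 + (zn n x + ∑ j, zn n (y j))) ^ (-(((N':ℝ)+1) * n / 2))) *
          (ENNReal.ofReal ((1 + zn n x) ^ ((n:ℝ)/2)) *
            ENNReal.ofReal ((1 + ∑ j, zn n (y j)) ^ (-((N':ℝ) * n / 2)))))
        = ENNReal.ofReal ((1 + zn n x) ^ ((n:ℝ)/2)) *
            ∑' y : Fin N' → Fin n → ℤ,
              ENNReal.ofReal (((1 + zn n x) + ∑ j, zn n (y j)) ^ (-(((N':ℝ)+1) * n / 2)) *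
                (1 + ∑ j, zn n (y j)) ^ (-((N':ℝ) * n / 2))) := by
          rw [← ENNReal.tsum_mul_left]
          refine tsum_congr fun y => ?_
          rw [ENNReal.ofReal_mul (Real.rpow_nonneg (by linarith [hS0 y]) _),
            show 1 + (zn n x + ∑ j, zn n (y j)) = (1 + zn n x) + ∑ j, zn n (y j) by ring]
          ring
      _ ≤ ENNReal.ofReal ((1 + zn n x) ^ ((n:ℝ)/2)) *
            ((C₁ : ℝ≥0∞) * ENNReal.ofReal ((1 + zn n x) ^ (-((n:ℝ)/2)))) :=
          mul_le_mul_right (hC₁ (1 + zn n x) hb) _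
      _ = (C₁ : ℝ≥0∞) * (ENNReal.ofReal ((1 + zn n x) ^ ((n:ℝ)/2)) *
            ENNReal.ofReal ((1 + zn n x) ^ (-((n:ℝ)/2)))) := by ring
      _ = (C₁ : ℝ≥0∞) := by rw [hone _ _ hb, mul_one]
  have h2 : ∀ y : Fin N' → Fin n → ℤ,
      (∑' x : Fin n → ℤ,
        ENNReal.ofReal ((1 + (zn n x + ∑ j, zn n (y j))) ^ (-(((N':ℝ)+1) * n / 2))) *
          (ENNReal.ofReal ((1 + zn n x) ^ (-((n:ℝ)/2))) *
            ENNReal.ofReal ((1 + ∑ j, zn n (y j)) ^ ((N':ℝ) * n / 2)))) ≤ (C₂ : ℝ≥0∞) := by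
    intro y
    have hb := hS1 y
    calc (∑' x : Fin n → ℤ,
        ENNReal.ofReal ((1 + (zn n x + ∑ j, zn n (y j))) ^ (-(((N':ℝ)+1) * n / 2))) *
          (ENNReal.ofReal ((1 + zn n x) ^ (-((n:ℝ)/2))) *
            ENNReal.ofReal ((1 + ∑ j, zn n (y j)) ^ ((N':ℝ) * n / 2))))
        = ENNReal.ofReal ((1 + ∑ j, zn n (y j)) ^ ((N':ℝ) * n / 2)) *
            ∑' x : Fin n → ℤ,
              ENNReal.ofReal (((1 + ∑ j, zn n (y j)) + zn n x) ^ (-(((N':ℝ)+1) * n / 2)) *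
                (1 + zn n x) ^ (-((n:ℝ)/2))) := by
          rw [← ENNReal.tsum_mul_left]
          refine tsum_congr fun x => ?_
          rw [ENNReal.ofReal_mul (Real.rpow_nonneg (by linarith [zn_nonneg n x, hS0 y]) _),
            show 1 + (zn n x + ∑ j, zn n (y j)) = (1 + ∑ j, zn n (y j)) + zn n x by ring]
          ring
      _ ≤ ENNReal.ofReal ((1 + ∑ j, zn n (y j)) ^ ((N':ℝ) * n / 2)) *
            ((C₂ : ℝ≥0∞) * ENNReal.ofReal ((1 + ∑ j, zn n (y j)) ^ (-((N':ℝ) * n / 2)))) :=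
          mul_le_mul_right (hC₂ (1 + ∑ j, zn n (y j)) hb) _
      _ = (C₂ : ℝ≥0∞) * (ENNReal.ofReal ((1 + ∑ j, zn n (y j)) ^ ((N':ℝ) * n / 2)) *
            ENNReal.ofReal ((1 + ∑ j, zn n (y j)) ^ (-((N':ℝ) * n / 2)))) := by ring
      _ = (C₂ : ℝ≥0∞) := by rw [hone _ _ hb, mul_one]
  -- value of V
  have hV : (∑' y : Fin N' → Fin n → ℤ, (∏ j : Fin N', ENNReal.ofReal (A j.succ (y j))) ^ 2)
      = ∏ j : Fin N', ∑' μ : Fin n → ℤ, ENNReal.ofReal (A j.succ μ) ^ 2 := by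
    rw [← tsum_pi_prod N' (fun j μ => ENNReal.ofReal (A j.succ μ) ^ 2)]
    exact tsum_congr fun y => by rw [← Finset.prod_pow]
  have hV0 : (∏ j : Fin N', ∑' μ : Fin n → ℤ, ENNReal.ofReal (A j.succ μ) ^ 2) ≠ 0 :=
    Finset.prod_ne_zero_iff.mpr fun j _ => hzero j.succ
  have hVt : (∏ j : Fin N', ∑' μ : Fin n → ℤ, ENNReal.ofReal (A j.succ μ) ^ 2) ≠ ⊤ :=
    (ENNReal.prod_lt_top fun j _ => lt_top_iff_ne_top.mpr (htop j.succ)).ne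
  -- apply the abstract estimate
  have hcore := core
    (fun (x : Fin n → ℤ) (y : Fin N' → Fin n → ℤ) =>
      ENNReal.ofReal ((1 + (zn n x + ∑ j, zn n (y j))) ^ (-(((N':ℝ)+1) * n / 2))))
    (fun x => ENNReal.ofReal (A 0 x))
    (fun y => ∏ j : Fin N', ENNReal.ofReal (A j.succ (y j)))
    (fun x => ENNReal.ofReal ((1 + zn n x) ^ ((n:ℝ)/2)))
    (fun x => ENNReal.ofReal ((1 + zn n x) ^ (-((n:ℝ)/2))))
    (fun y => ENNReal.ofReal ((1 + ∑ j, zn n (y j)) ^ (-((N':ℝ) * n / 2))))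
    (fun y => ENNReal.ofReal ((1 + ∑ j, zn n (y j)) ^ ((N':ℝ) * n / 2)))
    C₁ C₂
    (∑' μ : Fin n → ℤ, ENNReal.ofReal (A 0 μ) ^ 2)
    (∏ j : Fin N', ∑' μ : Fin n → ℤ, ENNReal.ofReal (A j.succ μ) ^ 2)
    (fun x => hone _ _ (hzn1 x)) (fun y => by rw [mul_comm]; exact hone _ _ (hS1 y))
    h1 h2 rfl hV (hzero 0) (htop 0) hV0 hVt hC₁pos.ne' hC₂pos.ne'
  -- reindex the left-hand side
  have hre : (∑' ν : Fin (N'+1) → Fin n → ℤ,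
      ENNReal.ofReal ((1 + ∑ j, zn n (ν j)) ^ (-(((N':ℝ)+1) * n / 2))) *
        ∏ j, ENNReal.ofReal (A j (ν j)))
      = ∑' x : Fin n → ℤ, ∑' y : Fin N' → Fin n → ℤ,
          ENNReal.ofReal ((1 + (zn n x + ∑ j, zn n (y j))) ^ (-(((N':ℝ)+1) * n / 2))) *
            (ENNReal.ofReal (A 0 x) * ∏ j : Fin N', ENNReal.ofReal (A j.succ (y j))) := by
    rw [← (Fin.consEquiv (fun _ : Fin (N'+1) => (Fin n → ℤ))).tsum_eq
      (fun ν : Fin (N'+1) → Fin n → ℤ =>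
        ENNReal.ofReal ((1 + ∑ j, zn n (ν j)) ^ (-(((N':ℝ)+1) * n / 2))) *
          ∏ j, ENNReal.ofReal (A j (ν j))), ENNReal.tsum_prod']
    refine tsum_congr fun x => tsum_congr fun y => ?_
    have hsum : (∑ j, zn n ((Fin.cons x y : ∀ _ : Fin (N'+1), Fin n → ℤ) j))
        = zn n x + ∑ j : Fin N', zn n (y j) := by
      rw [Fin.sum_univ_succ]
      simp [Fin.cons_zero, Fin.cons_succ]
    have hprod : (∏ j, ENNReal.ofReal (A j ((Fin.cons x y : ∀ _ : Fin (N'+1), Fin n → ℤ) j)))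
        = ENNReal.ofReal (A 0 x) * ∏ j : Fin N', ENNReal.ofReal (A j.succ (y j)) := by
      rw [Fin.prod_univ_succ]
      simp [Fin.cons_zero, Fin.cons_succ]
    simp only [Fin.consEquiv_apply]
    rw [hsum, hprod]
  rw [hre]
  refine le_trans hcore ?_
  -- final constant and product manipulations
  have hhalfprod : ((∏ j : Fin N', ∑' μ : Fin n → ℤ, ENNReal.ofReal (A j.succ μ) ^ 2) ^ (1/2:ℝ))
      = ∏ j : Fin N', (∑' μ : Fin n → ℤ, ENNReal.ofReal (A j.succ μ) ^ 2) ^ (1/2:ℝ) :=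
    (ENNReal.prod_rpow_of_nonneg (by norm_num : (0:ℝ) ≤ 1/2)).symm
  calc ((C₁ : ℝ≥0∞) * ∑' μ : Fin n → ℤ, ENNReal.ofReal (A 0 μ) ^ 2) ^ (1/2:ℝ) *
        ((C₂ : ℝ≥0∞) * ∏ j : Fin N', ∑' μ : Fin n → ℤ, ENNReal.ofReal (A j.succ μ) ^ 2) ^ (1/2:ℝ)
      = ((C₁ : ℝ≥0∞) ^ (1/2:ℝ) * (C₂ : ℝ≥0∞) ^ (1/2:ℝ)) *
          ((∑' μ : Fin n → ℤ, ENNReal.ofReal (A 0 μ) ^ 2) ^ (1/2:ℝ) *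
            (∏ j : Fin N', ∑' μ : Fin n → ℤ, ENNReal.ofReal (A j.succ μ) ^ 2) ^ (1/2:ℝ)) := by
        rw [ENNReal.mul_rpow_of_nonneg _ _ (by norm_num : (0:ℝ) ≤ 1/2),
          ENNReal.mul_rpow_of_nonneg _ _ (by norm_num : (0:ℝ) ≤ 1/2)]
        ring
    _ ≤ (((1 + C₁) * (1 + C₂) : ℝ≥0) : ℝ≥0∞) *
          ((∑' μ : Fin n → ℤ, ENNReal.ofReal (A 0 μ) ^ 2) ^ (1/2:ℝ) *
            (∏ j : Fin N', ∑' μ : Fin n → ℤ, ENNReal.ofReal (A j.succ μ) ^ 2) ^ (1/2:ℝ)) := by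
        apply mul_le_mul_left
        have e1 := enn_rpow_half_le (C₁ : ℝ≥0∞)
        have e2 := enn_rpow_half_le (C₂ : ℝ≥0∞)
        calc (C₁ : ℝ≥0∞) ^ (1/2:ℝ) * (C₂ : ℝ≥0∞) ^ (1/2:ℝ)
            ≤ (1 + (C₁ : ℝ≥0∞)) * (1 + (C₂ : ℝ≥0∞)) := mul_le_mul' e1 e2
          _ = (((1 + C₁) * (1 + C₂) : ℝ≥0) : ℝ≥0∞) := by push_cast; ring
    _ = (((1 + C₁) * (1 + C₂) : ℝ≥0) : ℝ≥0∞) *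
          ∏ j : Fin (N'+1), (∑' μ : Fin n → ℤ, ENNReal.ofReal (A j μ) ^ 2) ^ (1/2:ℝ) := by
        rw [hhalfprod, ← Fin.prod_univ_succ
          (fun j : Fin (N'+1) => (∑' μ : Fin n → ℤ, ENNReal.ofReal (A j μ) ^ 2) ^ (1/2:ℝ))]

end
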